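/- Let N ≥ 3 be an integer, p > 2, γ ∈ [0, (N−2)/N], and let U ∈ C²([0,∞)) be a bounded solution of (P_γ) with U not identically zero. Then there exists a constant C > 0 such that |U'(t)| ≤ C e^{−2t/N} and |U''(t)| ≤ C e^{−2t/N} for all t ≥ 0; moreover the limit lim_{t→∞} U(t) exists and is nonzero. -/

import Mathlib

open Real Filter Set MeasureTheory Asymptotics

noncomputable section

/-- `α_p = max{((N−2)p − 2N)/2, 0}`. -/
def alphaP (N : ℕ) (p : ℝ) : ℝ := max ((((N : ℝ) - 2) * p - 2 * (N : ℝ)) / 2) 0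

/-- `γ_p = (N−2)/(N+α_p)`. -/
def gammaP (N : ℕ) (p : ℝ) : ℝ := ((N : ℝ) - 2) / ((N : ℝ) + alphaP N p)

/-- `U` is bounded on `[0,∞)`. -/
def BddOn (U : ℝ → ℝ) : Prop := ∃ C : ℝ, ∀ t, 0 ≤ t → |U t| ≤ C

/-- `U` is a C² solution of problem (P_γ):
`−(e^{−γt}U')' = e^{−t}|U|^{p−2}U` on `[0,∞)`, `U(0) = 0`. -/
def SolP (p γ : ℝ) (U : ℝ → ℝ) : Prop :=
  ContDiff ℝ 2 U ∧ U 0 = 0 ∧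
  ∀ t : ℝ, 0 ≤ t →
    deriv (fun s => Real.exp (-γ * s) * deriv U s) t
      = -(Real.exp (-t) * |U t| ^ (p - 2) * U t)

/-- `U` has exactly `m` zeros in `(0,∞)`. -/
def ZeroCount (U : ℝ → ℝ) (m : ℕ) : Prop :=
  {t : ℝ | 0 < t ∧ U t = 0}.Finite ∧ {t : ℝ | 0 < t ∧ U t = 0}.ncard = m

/-- characterization of `U_γ`: bounded solution of (P_γ) with exactly `K−1`
zeros in `(0,∞)` and positive limit at `+∞`. -/
def IsUsol (p γ : ℝ) (K : ℕ) (U : ℝ → ℝ) : Prop :=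
  SolP p γ U ∧ BddOn U ∧ ZeroCount U (K - 1) ∧
    ∃ L : ℝ, 0 < L ∧ Filter.Tendsto U Filter.atTop (nhds L)

/-- `Ψ` is a bounded solution of the linearized eigenvalue problem (E_γ) with
eigenvalue `ν`: `−(e^{−γt}Ψ')' − (p−1)e^{−t}|U_γ|^{p−2}Ψ = ν e^{−γt}Ψ`, `Ψ(0)=0`. -/
def EigenEq (p γ : ℝ) (U : ℝ → ℝ) (ν : ℝ) (Ψ : ℝ → ℝ) : Prop :=
  ContDiff ℝ 2 Ψ ∧ Ψ 0 = 0 ∧ BddOn Ψ ∧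
  ∀ t : ℝ, 0 ≤ t →
    deriv (fun s => Real.exp (-γ * s) * deriv Ψ s) t
      = -((p - 1) * Real.exp (-t) * |U t| ^ (p - 2) * Ψ t + ν * Real.exp (-γ * t) * Ψ t)

/-- nontrivial on `[0,∞)`. -/
def Nontriv (Ψ : ℝ → ℝ) : Prop := ∃ t : ℝ, 0 ≤ t ∧ Ψ t ≠ 0

/-- `ν` is a negative eigenvalue of (E_γ). -/
def IsNegEigen (p γ : ℝ) (K : ℕ) (ν : ℝ) : Prop :=
  ν < 0 ∧ ∀ U : ℝ → ℝ, IsUsol p γ K U → ∃ Ψ, EigenEq p γ U ν Ψ ∧ Nontriv Ψ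

/-- `ν j γ` (for `1 ≤ j ≤ K`) enumerates the negative eigenvalues of (E_γ)
in strictly increasing order. -/
def Enumerates (p : ℝ) (K : ℕ) (γP : ℝ) (ν : ℕ → ℝ → ℝ) : Prop :=
  ∀ γ : ℝ, 0 ≤ γ → γ < γP →
    (∀ j j' : ℕ, 1 ≤ j → j < j' → j' ≤ K → ν j γ < ν j' γ) ∧
    (∀ j : ℕ, 1 ≤ j → j ≤ K → IsNegEigen p γ K (ν j γ)) ∧
    (∀ μ : ℝ, IsNegEigen p γ K μ → ∃ j : ℕ, 1 ≤ j ∧ j ≤ K ∧ μ = ν j γ)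

lemma int_exp_tail {β : ℝ} (t : ℝ) (hβ : 0 < β) :
    ∫ s in Ioi t, Real.exp (-β * s) = Real.exp (-β * t) / β := by
  have hd : ∀ x ∈ Ici t, HasDerivAt (fun s => -Real.exp (-β * s) / β)
      (Real.exp (-β * x)) x := by
    intro x _
    have h1 : HasDerivAt (fun s : ℝ => -β * s) (-β) x := by
      simpa using (hasDerivAt_id x).const_mul (-β)
    have h2 := (Real.hasDerivAt_exp (-β * x)).comp x h1
    have h3 := h2.neg.div_const β
    have e : -(Real.exp (-β * x) * -β) / β = Real.exp (-β * x) := by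
      rw [div_eq_iff hβ.ne']; ring
    rw [e] at h3
    exact h3
  have hint : IntegrableOn (fun s => Real.exp (-β * s)) (Ioi t) :=
    exp_neg_integrableOn_Ioi t hβ
  have htend : Tendsto (fun s => -Real.exp (-β * s) / β) atTop (nhds 0) := by
    have : Tendsto (fun s : ℝ => Real.exp (-β * s)) atTop (nhds 0) := by
      have hb : Tendsto (fun s : ℝ => -β * s) atTop atBot :=
        tendsto_id.const_mul_atTop_of_neg (neg_lt_zero.mpr hβ)
      exact Real.tendsto_exp_atBot.comp hb
    simpa using (this.neg.div_const β)
  have := integral_Ioi_of_hasDerivAt_of_tendsto' hd hint htend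
  rw [this]
  field_simp
  ring


lemma integrableOn_exp_bound {f : ℝ → ℝ} {t c β : ℝ} (hβ : 0 < β)
    (hcont : Continuous f) (hb : ∀ s, t ≤ s → |f s| ≤ c * Real.exp (-β * s)) :
    IntegrableOn f (Ioi t) := by
  refine Integrable.mono' ((exp_neg_integrableOn_Ioi t hβ).const_mul c)
    hcont.aestronglyMeasurable.restrict ?_
  refine (ae_restrict_iff' measurableSet_Ioi).mpr (ae_of_all _ fun s hs => ?_)
  simpa [Real.norm_eq_abs] using hb s (le_of_lt hs)


lemma tail_bound_exp {f f' : ℝ → ℝ} {t l c β : ℝ} (hβ : 0 < β)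
    (hd : ∀ x, HasDerivAt f (f' x) x) (hcont : Continuous f')
    (hb : ∀ s, t ≤ s → |f' s| ≤ c * Real.exp (-β * s))
    (hl : Tendsto f atTop (nhds l)) :
    |f t - l| ≤ c * Real.exp (-β * t) / β := by
  have hint : IntegrableOn f' (Ioi t) := integrableOn_exp_bound hβ hcont hb
  have hrep : ∫ s in Ioi t, f' s = l - f t :=
    integral_Ioi_of_hasDerivAt_of_tendsto' (fun x _ => hd x) hint hl
  have h1 : |f t - l| = ‖∫ s in Ioi t, f' s‖ := by
    rw [hrep, Real.norm_eq_abs, abs_sub_comm]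
  rw [h1]
  have h2 : ‖∫ s in Ioi t, f' s‖ ≤ ∫ s in Ioi t, c * Real.exp (-β * s) := by
    refine norm_integral_le_of_norm_le ((exp_neg_integrableOn_Ioi t hβ).const_mul c) ?_
    refine (ae_restrict_iff' measurableSet_Ioi).mpr (ae_of_all _ fun s hs => ?_)
    simpa [Real.norm_eq_abs] using hb s (le_of_lt hs)
  calc ‖∫ s in Ioi t, f' s‖ ≤ ∫ s in Ioi t, c * Real.exp (-β * s) := h2
    _ = c * Real.exp (-β * t) / β := by
        rw [integral_const_mul, int_exp_tail t hβ]; ring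


lemma tendsto_of_deriv_decay {f f' : ℝ → ℝ} {c β : ℝ} (hβ : 0 < β)
    (hd : ∀ x, HasDerivAt f (f' x) x) (hcont : Continuous f')
    (hb : ∀ s, (0:ℝ) ≤ s → |f' s| ≤ c * Real.exp (-β * s)) :
    ∃ l, Tendsto f atTop (nhds l) := by
  have hint : IntegrableOn f' (Ioi 0) :=
    integrableOn_exp_bound hβ hcont fun s hs => hb s hs
  have htt : Tendsto (fun t : ℝ => ∫ s in (0:ℝ)..t, f' s) atTop
      (nhds (∫ s in Ioi (0:ℝ), f' s)) :=
    intervalIntegral_tendsto_integral_Ioi 0 hint tendsto_id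
  refine ⟨f 0 + ∫ s in Ioi (0:ℝ), f' s, ?_⟩
  have heqf : ∀ t : ℝ, f t = f 0 + ∫ s in (0:ℝ)..t, f' s := by
    intro t
    have := intervalIntegral.integral_eq_sub_of_hasDerivAt
      (f := f) (f' := f') (a := 0) (b := t) (fun x _ => hd x)
      (hcont.intervalIntegrable 0 t)
    linarith [this]
  exact Tendsto.congr (fun t => (heqf t).symm) (tendsto_const_nhds.add htt)

lemma cseq_rec (M C δ : ℝ) (n : ℕ) (hδ : δ ≠ 0)
    (c : ℕ → ℝ) (hc : ∀ m : ℕ, c m = M * (C / δ) ^ m / (m.factorial : ℝ)) :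
    (C * c n) / (((n:ℝ)+1)*δ) = c (n+1) := by
  rw [hc n, hc (n+1)]
  have hf : ((n.factorial : ℝ)) ≠ 0 := by
    exact_mod_cast n.factorial_pos.ne'
  have hn1 : ((n:ℝ)+1) ≠ 0 := by positivity
  rw [pow_succ, Nat.factorial_succ]
  push_cast
  field_simp


lemma no_bounded_deriv_ge {f g : ℝ → ℝ} {M c T : ℝ} (hc : 0 < c)
    (hM : ∀ t, 0 ≤ t → |f t| ≤ M) (hT : 0 ≤ T)
    (hd : ∀ x, HasDerivAt f (g x) x) (hcont : Continuous g)
    (h : ∀ t, T ≤ t → c ≤ g t) : False := by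
  have hM0 : 0 ≤ M := le_trans (abs_nonneg _) (hM 0 le_rfl)
  obtain ⟨X, hX⟩ : ∃ X : ℝ, X = T + (2 * M + 1) / c := ⟨_, rfl⟩
  have hTX : T ≤ X := by
    have : 0 < (2 * M + 1) / c := by positivity
    linarith
  have hftc : ∫ s in T..X, g s = f X - f T :=
    intervalIntegral.integral_eq_sub_of_hasDerivAt (fun x _ => hd x)
      (hcont.intervalIntegrable T X)
  have hmono : ∫ s in T..X, (c : ℝ) ≤ ∫ s in T..X, g s := by
    refine intervalIntegral.integral_mono_on hTX intervalIntegrable_const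
      (hcont.intervalIntegrable T X) fun s hs => h s hs.1
  rw [intervalIntegral.integral_const, smul_eq_mul] at hmono
  have hXT : (X - T) * c = 2 * M + 1 := by
    rw [hX]; field_simp; ring
  have h1 : |f X| ≤ M := hM X (hT.trans hTX)
  have h2 : |f T| ≤ M := hM T hT
  rw [hftc] at hmono
  have := abs_le.mp h1
  have := abs_le.mp h2
  linarith [hmono, hXT.symm.le]

/-- decay of derivatives and existence of a nonzero limit for
bounded nontrivial solutions of (P_γ), `0 ≤ γ ≤ (N−2)/N`. -/
theorem stmt1 (N : ℕ) (hN : 3 ≤ N) (p γ : ℝ) (hp : 2 < p)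
    (hγ0 : 0 ≤ γ) (hγ1 : γ ≤ ((N : ℝ) - 2) / (N : ℝ))
    (U : ℝ → ℝ) (hU : SolP p γ U) (hbdd : BddOn U)
    (hne : ∃ t : ℝ, 0 ≤ t ∧ U t ≠ 0) :
    (∃ C : ℝ, 0 < C ∧ ∀ t : ℝ, 0 ≤ t →
        |deriv U t| ≤ C * Real.exp (-(2 / (N : ℝ)) * t) ∧
        |deriv (deriv U) t| ≤ C * Real.exp (-(2 / (N : ℝ)) * t)) ∧
    ∃ L : ℝ, L ≠ 0 ∧ Filter.Tendsto U Filter.atTop (nhds L) := by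

  obtain ⟨hC2, hU0, heq⟩ := hU
  obtain ⟨M, hM⟩ := hbdd
  obtain ⟨t₀, ht₀, hUt₀⟩ := hne
  have hM0 : 0 ≤ M := le_trans (abs_nonneg _) (hM 0 le_rfl)
  -- basic numeric facts
  have hN3 : (3:ℝ) ≤ (N:ℝ) := by exact_mod_cast hN
  have hN0 : (0:ℝ) < (N:ℝ) := by linarith
  have hfrac : ((N:ℝ) - 2) / (N:ℝ) = 1 - 2 / (N:ℝ) := by field_simp
  have hδpos : 0 < 1 - γ := by
    have h2N : 0 < 2 / (N:ℝ) := by positivity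
    rw [hfrac] at hγ1; linarith
  have hδN : 2 / (N:ℝ) ≤ 1 - γ := by rw [hfrac] at hγ1; linarith
  -- differentiability facts
  have hsucc : ContDiff ℝ (1 + 1) U := by norm_num at hC2 ⊢; exact hC2
  obtain ⟨hdiffU, -, hC1⟩ := contDiff_succ_iff_deriv.mp hsucc
  obtain ⟨hdU, hcontU2⟩ := contDiff_one_iff_deriv.mp hC1
  have hcontU1 : Continuous (deriv U) := hdU.continuous
  set V : ℝ → ℝ := fun s => Real.exp (-γ * s) * deriv U s with hVdef
  have hVhas : ∀ t, HasDerivAt V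
      (-γ * Real.exp (-γ * t) * deriv U t + Real.exp (-γ * t) * deriv (deriv U) t) t := by
    intro t
    have ha : HasDerivAt (fun s : ℝ => -γ * s) (-γ) t := by
      simpa using (hasDerivAt_id t).const_mul (-γ)
    have h1 : HasDerivAt (fun s => Real.exp (-γ * s)) (-γ * Real.exp (-γ * t)) t := by
      simpa [mul_comm] using ha.exp
    exact h1.mul ((hdU t).hasDerivAt)
  have hVderiv : ∀ t, deriv V t
      = -γ * Real.exp (-γ * t) * deriv U t + Real.exp (-γ * t) * deriv (deriv U) t :=
    fun t => (hVhas t).deriv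
  have hVd : ∀ t, HasDerivAt V (deriv V t) t :=
    fun t => (hVhas t).differentiableAt.hasDerivAt
  have hVcont : Continuous (deriv V) := by
    have : deriv V = fun t =>
        -γ * Real.exp (-γ * t) * deriv U t + Real.exp (-γ * t) * deriv (deriv U) t :=
      funext hVderiv
    rw [this]; fun_prop
  have hUV : ∀ t, deriv U t = Real.exp (γ * t) * V t := by
    intro t
    rw [hVdef]
    have : Real.exp (γ * t) * Real.exp (-γ * t) = 1 := by
      rw [← Real.exp_add]; ring_nf; exact Real.exp_zero
    calc deriv U t = (Real.exp (γ * t) * Real.exp (-γ * t)) * deriv U t := by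
          rw [this, one_mul]
      _ = Real.exp (γ * t) * (Real.exp (-γ * t) * deriv U t) := by ring
  -- key pointwise bound on deriv V
  have keyV : ∀ A a : ℝ, 0 ≤ A → 0 ≤ a →
      (∀ r, 0 ≤ r → |U r| ≤ A * Real.exp (-a * r)) →
      ∀ s, 0 ≤ s → |deriv V s| ≤ (M ^ (p-2) * A) * Real.exp (-(1+a) * s) := by
    intro A a hA ha hUb s hs
    rw [heq s hs]
    have hr1 : |U s| ^ (p-2) ≤ M ^ (p-2) :=
      Real.rpow_le_rpow (abs_nonneg _) (hM s hs) (by linarith)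
    have habs : |(-(Real.exp (-s) * |U s| ^ (p-2) * U s))|
        = Real.exp (-s) * |U s| ^ (p-2) * |U s| := by
      rw [abs_neg, abs_mul, abs_mul, Real.abs_exp,
        abs_of_nonneg (Real.rpow_nonneg (abs_nonneg _) _)]
    rw [habs]
    have hstep : Real.exp (-s) * |U s| ^ (p-2) * |U s|
        ≤ Real.exp (-s) * M ^ (p-2) * (A * Real.exp (-a * s)) := by
      have h1 : Real.exp (-s) * |U s| ^ (p-2) ≤ Real.exp (-s) * M ^ (p-2) :=
        mul_le_mul_of_nonneg_left hr1 (Real.exp_pos _).le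
      exact mul_le_mul h1 (hUb s hs) (abs_nonneg _)
        (mul_nonneg (Real.exp_pos _).le (Real.rpow_nonneg hM0 _))
    refine hstep.trans (le_of_eq ?_)
    have hee : Real.exp (-s) * Real.exp (-a * s) = Real.exp (-(1+a) * s) := by
      rw [← Real.exp_add]; ring_nf
    calc Real.exp (-s) * M ^ (p-2) * (A * Real.exp (-a * s))
        = (M ^ (p-2) * A) * (Real.exp (-s) * Real.exp (-a * s)) := by ring
      _ = (M ^ (p-2) * A) * Real.exp (-(1+a) * s) := by rw [hee]
  -- existence of limit of V
  have hBbd : ∀ r, 0 ≤ r → |U r| ≤ M * Real.exp (-(0:ℝ) * r) := by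
    intro r hr; simpa using hM r hr
  obtain ⟨v, hv⟩ := tendsto_of_deriv_decay (c := M ^ (p-2) * M) (β := 1 + 0)
    (by norm_num) hVd hVcont (fun s hs => keyV M 0 hM0 le_rfl hBbd s hs)
  -- V tends to 0
  have hv0 : v = 0 := by
    by_contra hvne
    have habs : 0 < |v| := abs_pos.mpr hvne
    have hVtail : ∀ t, 0 ≤ t → |V t - v| ≤ (M ^ (p-2) * M) * Real.exp (-(1+0) * t) := by
      intro t ht
      have h1 := tail_bound_exp (β := 1 + 0) (by norm_num) hVd hVcont
        (fun s hs => keyV M 0 hM0 le_rfl hBbd s (ht.trans hs)) hv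
      simpa using h1
    have htend0 : Tendsto (fun t : ℝ => (M ^ (p-2) * M) * Real.exp (-(1+0) * t))
        atTop (nhds 0) := by
      have hb : Tendsto (fun s : ℝ => -(1+0:ℝ) * s) atTop atBot :=
        tendsto_id.const_mul_atTop_of_neg (by norm_num)
      have := (Real.tendsto_exp_atBot.comp hb).const_mul (M ^ (p-2) * M)
      simpa using this
    have hev : ∀ᶠ t in atTop, (M ^ (p-2) * M) * Real.exp (-(1+0) * t) < |v| / 2 :=
      htend0.eventually_lt_const (by positivity)
    obtain ⟨T₀, hT₀⟩ := eventually_atTop.mp hev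
    obtain ⟨T, hT1, hT2⟩ : ∃ T : ℝ, 0 ≤ T ∧ T₀ ≤ T := ⟨max T₀ 0, le_max_right _ _, le_max_left _ _⟩
    have hsmall : ∀ t, T ≤ t → |V t - v| < |v| / 2 := fun t ht =>
      lt_of_le_of_lt (hVtail t (hT1.trans ht)) (hT₀ t (hT2.trans ht))
    rcases lt_or_gt_of_ne hvne with hneg | hpos
    · -- v < 0 : deriv U t ≤ v/2 for t ≥ T
      refine no_bounded_deriv_ge (f := fun t => -U t) (g := fun t => -deriv U t)
        (M := M) (c := -v/2) (T := T) (by linarith) (fun t ht => by simpa using hM t ht)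
        hT1 (fun x => ((hdiffU x).hasDerivAt).neg) hcontU1.neg ?_
      intro t ht
      have h1 := hsmall t ht
      have hVle : V t ≤ v / 2 := by
        have := abs_lt.mp h1
        have : V t - v < |v| / 2 := this.2
        rw [abs_of_neg hneg] at this
        linarith
      have hVneg : V t ≤ 0 := by linarith
      have hexp1 : 1 ≤ Real.exp (γ * t) :=
        Real.one_le_exp (mul_nonneg hγ0 (hT1.trans ht))
      have : deriv U t ≤ V t := by
        rw [hUV t]
        nlinarith [Real.exp_pos (γ * t)]
      have : deriv U t ≤ v / 2 := this.trans hVle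
      linarith
    · -- v > 0 : deriv U t ≥ v/2 for t ≥ T
      refine no_bounded_deriv_ge (f := U) (g := deriv U)
        (M := M) (c := v/2) (T := T) (by linarith) hM
        hT1 (fun x => (hdiffU x).hasDerivAt) hcontU1 ?_
      intro t ht
      have h1 := hsmall t ht
      have hVge : v / 2 ≤ V t := by
        have := (abs_lt.mp h1).1
        rw [abs_of_pos hpos] at this
        linarith
      have hexp1 : 1 ≤ Real.exp (γ * t) :=
        Real.one_le_exp (mul_nonneg hγ0 (hT1.trans ht))
      rw [hUV t]
      nlinarith [Real.exp_pos (γ * t)]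
  rw [hv0] at hv
  -- bound on |V|
  have hVbd : ∀ A a : ℝ, 0 ≤ A → 0 ≤ a →
      (∀ r, 0 ≤ r → |U r| ≤ A * Real.exp (-a * r)) →
      ∀ t, 0 ≤ t → |V t| ≤ (M ^ (p-2) * A) * Real.exp (-(1+a) * t) := by
    intro A a hA ha hUb t ht
    have h1 := tail_bound_exp (β := 1 + a) (by linarith) hVd hVcont
      (fun s hs => keyV A a hA ha hUb s (ht.trans hs)) hv
    rw [sub_zero] at h1
    refine h1.trans ?_
    exact div_le_self (by positivity) (by linarith)
  -- bound on |deriv U|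
  have hU'bd : ∀ A a : ℝ, 0 ≤ A → 0 ≤ a →
      (∀ r, 0 ≤ r → |U r| ≤ A * Real.exp (-a * r)) →
      ∀ t, 0 ≤ t → |deriv U t| ≤ (M ^ (p-2) * A) * Real.exp (-((1+a)-γ) * t) := by
    intro A a hA ha hUb t ht
    rw [hUV t, abs_mul, Real.abs_exp]
    calc Real.exp (γ * t) * |V t|
        ≤ Real.exp (γ * t) * ((M ^ (p-2) * A) * Real.exp (-(1+a) * t)) := by
          exact mul_le_mul_of_nonneg_left (hVbd A a hA ha hUb t ht) (Real.exp_pos _).le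
      _ = (M ^ (p-2) * A) * Real.exp (-((1+a)-γ) * t) := by
          rw [mul_comm, mul_assoc, ← Real.exp_add]; ring_nf
  
  -- limit of U exists
  have hU'B : ∀ t, 0 ≤ t → |deriv U t| ≤ (M ^ (p-2) * M) * Real.exp (-((1+0)-γ) * t) :=
    fun t ht => hU'bd M 0 hM0 le_rfl hBbd t ht
  have hβ1 : (0:ℝ) < (1+0)-γ := by norm_num; linarith
  obtain ⟨L, hL⟩ := tendsto_of_deriv_decay (c := M ^ (p-2) * M) (β := (1+0)-γ)
    hβ1 (fun x => (hdiffU x).hasDerivAt) hcontU1 hU'B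
  -- second derivative formula
  have hU''eq : ∀ t, deriv (deriv U) t = Real.exp (γ * t) * deriv V t + γ * deriv U t := by
    intro t
    have hprod : Real.exp (γ * t) * Real.exp (-γ * t) = 1 := by
      rw [← Real.exp_add]; ring_nf; exact Real.exp_zero
    have h2 : Real.exp (γ * t) * deriv V t = -γ * deriv U t + deriv (deriv U) t := by
      rw [hVderiv t]
      calc Real.exp (γ * t) * (-γ * Real.exp (-γ * t) * deriv U t
            + Real.exp (-γ * t) * deriv (deriv U) t)
          = (Real.exp (γ * t) * Real.exp (-γ * t))
            * (-γ * deriv U t + deriv (deriv U) t) := by ring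
        _ = -γ * deriv U t + deriv (deriv U) t := by rw [hprod, one_mul]
    linarith [h2]
  have hdVB : ∀ s, 0 ≤ s → |deriv V s| ≤ (M ^ (p-2) * M) * Real.exp (-(1+0) * s) :=
    fun s hs => keyV M 0 hM0 le_rfl hBbd s hs
  have hB0 : 0 ≤ M ^ (p-2) * M := mul_nonneg (Real.rpow_nonneg hM0 _) hM0
  have hγlt1 : γ < 1 := by linarith
  have hexpmono : ∀ t : ℝ, 0 ≤ t → Real.exp (-(1-γ) * t) ≤ Real.exp (-(2/(N:ℝ)) * t) := by
    intro t ht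
    apply Real.exp_le_exp.mpr
    nlinarith
  have hmain : ∀ t, 0 ≤ t →
      |deriv U t| ≤ (2 * (M ^ (p-2) * M) + 1) * Real.exp (-(2/(N:ℝ)) * t) ∧
      |deriv (deriv U) t| ≤ (2 * (M ^ (p-2) * M) + 1) * Real.exp (-(2/(N:ℝ)) * t) := by
    intro t ht
    constructor
    · refine (hU'B t ht).trans ?_
      have : -((1+0:ℝ)-γ) = -(1-γ) := by norm_num
      rw [this]
      exact mul_le_mul (by linarith) (hexpmono t ht) (Real.exp_pos _).le (by linarith)
    · have e1 : Real.exp (γ * t) * Real.exp (-(1+0) * t) = Real.exp (-(1-γ) * t) := by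
        rw [← Real.exp_add]; ring_nf
      have step1 : |deriv (deriv U) t| ≤ Real.exp (γ * t) * |deriv V t| + γ * |deriv U t| := by
        rw [hU''eq t]
        refine (abs_add_le _ _).trans ?_
        rw [abs_mul, abs_mul, Real.abs_exp, abs_of_nonneg hγ0]
      have step2 : Real.exp (γ * t) * |deriv V t| + γ * |deriv U t|
          ≤ Real.exp (γ * t) * ((M ^ (p-2) * M) * Real.exp (-(1+0) * t))
            + γ * ((M ^ (p-2) * M) * Real.exp (-((1+0)-γ) * t)) :=
        add_le_add (mul_le_mul_of_nonneg_left (hdVB t ht) (Real.exp_pos _).le)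
          (mul_le_mul_of_nonneg_left (hU'B t ht) hγ0)
      have e2 : -((1+0:ℝ)-γ) = -(1-γ) := by norm_num
      have step3 : Real.exp (γ * t) * ((M ^ (p-2) * M) * Real.exp (-(1+0) * t))
            + γ * ((M ^ (p-2) * M) * Real.exp (-((1+0)-γ) * t))
          = (1+γ) * (M ^ (p-2) * M) * Real.exp (-(1-γ) * t) := by
        rw [e2]
        calc Real.exp (γ * t) * ((M ^ (p-2) * M) * Real.exp (-(1+0) * t))
              + γ * ((M ^ (p-2) * M) * Real.exp (-(1-γ) * t))
            = (M ^ (p-2) * M) * (Real.exp (γ * t) * Real.exp (-(1+0) * t))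
              + γ * ((M ^ (p-2) * M) * Real.exp (-(1-γ) * t)) := by ring
          _ = (1+γ) * (M ^ (p-2) * M) * Real.exp (-(1-γ) * t) := by rw [e1]; ring
      have step4 : (1+γ) * (M ^ (p-2) * M) * Real.exp (-(1-γ) * t)
          ≤ (2 * (M ^ (p-2) * M) + 1) * Real.exp (-(2/(N:ℝ)) * t) := by
        refine mul_le_mul (by nlinarith) (hexpmono t ht) (Real.exp_pos _).le (by linarith)
      linarith [step1, step2, step3.le, step3.ge, step4]
  refine ⟨⟨2 * (M ^ (p-2) * M) + 1, by positivity, hmain⟩, L, fun hL0 => ?_, hL⟩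
  -- suppose L = 0 and derive a contradiction
  rw [hL0] at hL
  have hC₂0 : 0 ≤ M ^ (p-2) := Real.rpow_nonneg hM0 _
  have hq0 : 0 ≤ M ^ (p-2) / (1-γ) := div_nonneg hC₂0 hδpos.le
  obtain ⟨cseq, hcs⟩ : ∃ c : ℕ → ℝ,
      ∀ n : ℕ, c n = M * (M ^ (p-2) / (1-γ)) ^ n / (n.factorial : ℝ) := ⟨_, fun _ => rfl⟩
  have hcseq0 : ∀ n, 0 ≤ cseq n := fun n => by
    rw [hcs n]
    exact div_nonneg (mul_nonneg hM0 (pow_nonneg hq0 n)) (Nat.cast_nonneg _)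
  have claim : ∀ n : ℕ, ∀ t, 0 ≤ t → |U t| ≤ cseq n * Real.exp (-((n:ℝ)*(1-γ)) * t) := by
    intro n
    induction n with
    | zero => intro t ht; rw [hcs 0]; simpa using hM t ht
    | succ n ih =>
      intro t ht
      have ha : 0 ≤ (n:ℝ)*(1-γ) := by positivity
      have hU' := hU'bd (cseq n) ((n:ℝ)*(1-γ)) (hcseq0 n) ha ih
      have hexpid : ((1:ℝ)+(n:ℝ)*(1-γ))-γ = ((n:ℝ)+1)*(1-γ) := by ring
      have hβpos : (0:ℝ) < ((n:ℝ)+1)*(1-γ) := by positivity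
      have htail := tail_bound_exp (β := ((n:ℝ)+1)*(1-γ)) hβpos
        (fun x => (hdiffU x).hasDerivAt) hcontU1
        (fun s hs => by
          rw [← hexpid]; exact hU' s (ht.trans hs)) hL
      rw [sub_zero] at htail
      refine htail.trans (le_of_eq ?_)
      have hfact : (M ^ (p-2) * cseq n) / (((n:ℝ)+1)*(1-γ)) = cseq (n+1) :=
        cseq_rec M (M ^ (p-2)) (1-γ) n hδpos.ne' cseq hcs
      rw [mul_div_right_comm, hfact]
      norm_cast
  have hle : ∀ n, |U t₀| ≤ cseq n := by
    intro n
    refine (claim n t₀ ht₀).trans ?_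
    have h1 : Real.exp (-((n:ℝ)*(1-γ)) * t₀) ≤ 1 := by
      apply Real.exp_le_one_iff.mpr
      have : 0 ≤ ((n:ℝ)*(1-γ)) * t₀ := by positivity
      linarith
    calc cseq n * Real.exp (-((n:ℝ)*(1-γ)) * t₀) ≤ cseq n * 1 :=
          mul_le_mul_of_nonneg_left h1 (hcseq0 n)
      _ = cseq n := mul_one _
  have hlim : Tendsto cseq atTop (nhds 0) := by
    have h0 := FloorSemiring.tendsto_pow_div_factorial_atTop (K := ℝ) (M ^ (p-2) / (1-γ))
    have h1 := h0.const_mul M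
    rw [mul_zero] at h1
    refine h1.congr fun n => ?_
    rw [hcs n]; ring
  have hfin : |U t₀| ≤ 0 := ge_of_tendsto hlim (Eventually.of_forall hle)
  exact hUt₀ (abs_eq_zero.mp (le_antisymm hfin (abs_nonneg _)))
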